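/- Let d ≥ 2, let F : ℝ^d → ℂ be a Schwartz function, and let K : ℝ^d → ℂ be a bounded measurable function whose support is contained in {x ∈ ℝ^d : |x⃗| ≤ |x⁰| + C} for some C ≥ 0. Fix ε ∈ (0, 1) and n ∈ ℕ. Then there exists a constant C' such that for every a ∈ ℝ^d with |a⁰| ≤ (1 − ε)|a⃗|, one has | ∫_{ℝ^d} F(x − a) K(x) dx | ≤ C' · (1 + |a|)^{−n}. (This is the approximate locality estimate: the pairing of the translated test function F(· − a) against a kernel supported near the light cone decays faster than any inverse power of |a| as a → ∞ in spacelike directions.) -/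

import Mathlib

open MeasureTheory

noncomputable section

/-- Spatial part of a spacetime point. -/
def spatial {m : ℕ} (p : EuclideanSpace ℝ (Fin (m + 1))) : EuclideanSpace ℝ (Fin m) :=
  WithLp.toLp 2 (fun j : Fin m => p j.succ)

lemma sq_split {m : ℕ} (p : EuclideanSpace ℝ (Fin (m+1))) :
    ‖p‖^2 = (p 0)^2 + ‖spatial p‖^2 := by
  rw [EuclideanSpace.norm_eq, EuclideanSpace.norm_eq,
    Real.sq_sqrt (by positivity), Real.sq_sqrt (by positivity)]
  simp [Fin.sum_univ_succ, spatial, Real.norm_eq_abs, sq_abs]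

lemma abs_zeroth_le {m : ℕ} (p : EuclideanSpace ℝ (Fin (m+1))) : |p 0| ≤ ‖p‖ := by
  have h := sq_split p
  nlinarith [norm_nonneg p, norm_nonneg (spatial p), abs_nonneg (p 0), sq_abs (p 0)]

lemma spatial_norm_le {m : ℕ} (p : EuclideanSpace ℝ (Fin (m+1))) : ‖spatial p‖ ≤ ‖p‖ := by
  have h := sq_split p
  nlinarith [norm_nonneg p, norm_nonneg (spatial p), sq_nonneg (p 0)]

lemma norm_le_split {m : ℕ} (p : EuclideanSpace ℝ (Fin (m+1))) :
    ‖p‖ ≤ |p 0| + ‖spatial p‖ := by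
  have h := sq_split p
  nlinarith [norm_nonneg p, norm_nonneg (spatial p), abs_nonneg (p 0), sq_abs (p 0)]

set_option maxHeartbeats 1000000 in
/-- Approximate locality estimate: the pairing of a translated Schwartz function
`F(·−a)` against a bounded kernel `K` supported in a `C`-neighborhood of the light
cone decays faster than any inverse power of `|a|` as `a → ∞` in spacelike
directions. -/
theorem statement14 (m : ℕ) (hm : 1 ≤ m)
    (F : SchwartzMap (EuclideanSpace ℝ (Fin (m + 1))) ℂ)
    (K : EuclideanSpace ℝ (Fin (m + 1)) → ℂ) (hKmeas : Measurable K)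
    (B : ℝ) (hKbd : ∀ x, ‖K x‖ ≤ B)
    (C : ℝ) (hC : 0 ≤ C)
    (hKsupp : Function.support K ⊆ {x | ‖spatial x‖ ≤ |x 0| + C})
    (ε : ℝ) (hε1 : 0 < ε) (hε2 : ε < 1) (n : ℕ) :
    ∃ C' : ℝ, ∀ a : EuclideanSpace ℝ (Fin (m + 1)),
      |a 0| ≤ (1 - ε) * ‖spatial a‖ →
      ‖∫ x, F (x - a) * K x‖ ≤ C' / (1 + ‖a‖) ^ n := by
  have hB0 : 0 ≤ B := le_trans (norm_nonneg _) (hKbd 0)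
  -- decay constant
  set k := n + (m + 2) with hk
  set D : ℝ := 2 ^ k *
    (Finset.Iic (k, 0)).sup (schwartzSeminormFamily ℝ (EuclideanSpace ℝ (Fin (m + 1))) ℂ) F
    with hDdef
  have hD0 : 0 ≤ D := by positivity
  have hD : ∀ y : EuclideanSpace ℝ (Fin (m + 1)), (1 + ‖y‖) ^ k * ‖F y‖ ≤ D := by
    intro y
    have := SchwartzMap.one_add_le_sup_seminorm_apply (𝕜 := ℝ) (m := (k, 0)) le_rfl le_rfl F y
    rw [hDdef]; simp at this; exact this
  -- the cone constant
  set c : ℝ := ε / (8 + 2 * C) with hcdef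
  have hc : 0 < c := by positivity
  -- integrable comparison function
  have hint : Integrable (fun x : EuclideanSpace ℝ (Fin (m + 1)) =>
      ((1 + ‖x‖) ^ (m + 2 : ℕ))⁻¹) := by
    have hr : (Module.finrank ℝ (EuclideanSpace ℝ (Fin (m + 1))) : ℝ) < (m + 2 : ℕ) := by
      simp only [finrank_euclideanSpace, Fintype.card_fin]
      push_cast; linarith
    have h := integrable_one_add_norm (E := EuclideanSpace ℝ (Fin (m + 1))) (μ := volume) hr
    convert h using 2 with x
    rw [← Real.rpow_natCast (1 + ‖x‖) (m + 2), ← Real.rpow_neg (by positivity)]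
  set I : ℝ := ∫ x : EuclideanSpace ℝ (Fin (m + 1)), ((1 + ‖x‖) ^ (m + 2 : ℕ))⁻¹ with hIdef
  have hI0 : 0 ≤ I := integral_nonneg fun x => by positivity
  refine ⟨B * D * I / c ^ n, fun a ha => ?_⟩
  have ha1 : 0 < 1 + ‖a‖ := by positivity
  -- geometric estimate on the support of K
  have hgeom : ∀ x ∈ Function.support K, c * (1 + ‖a‖) ≤ 1 + ‖x - a‖ := by
    intro x hx
    have hx' := hKsupp hx
    simp only [Set.mem_setOf_eq] at hx'
    have h1 : |x 0 - a 0| ≤ ‖x - a‖ := abs_zeroth_le (x - a)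
    have h2 : ‖spatial x - spatial a‖ ≤ ‖x - a‖ := by
      have e : spatial (x - a) = spatial x - spatial a := by ext j; simp [spatial]
      rw [← e]; exact spatial_norm_le (x - a)
    have h3 : |x 0| - |a 0| ≤ |x 0 - a 0| := abs_sub_abs_le_abs_sub _ _
    have h4 : ‖spatial a‖ - ‖spatial x‖ ≤ ‖spatial x - spatial a‖ := by
      have := norm_sub_norm_le (spatial a) (spatial x)
      rwa [norm_sub_rev] at this
    have h5 : ‖a‖ ≤ |a 0| + ‖spatial a‖ := norm_le_split a
    have h6 : |a 0| ≤ ‖spatial a‖ := le_trans ha (by nlinarith [norm_nonneg (spatial a)])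
    have key : ε * ‖a‖ / 2 - C ≤ 2 * ‖x - a‖ := by nlinarith
    have hxa0 : (0:ℝ) ≤ ‖x - a‖ := norm_nonneg _
    rw [hcdef, div_mul_eq_mul_div, div_le_iff₀ (by positivity)]
    nlinarith [norm_nonneg a]
  -- integrability of the integrand
  have hFint : Integrable (fun x : EuclideanSpace ℝ (Fin (m + 1)) => F (x - a)) :=
    F.integrable.comp_sub_right a
  have hmeas : AEStronglyMeasurable
      (fun x : EuclideanSpace ℝ (Fin (m + 1)) => F (x - a) * K x) volume :=
    ((F.continuous.comp (continuous_sub_right a)).aestronglyMeasurable).mul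
      hKmeas.aestronglyMeasurable
  have hprod : Integrable (fun x : EuclideanSpace ℝ (Fin (m + 1)) => F (x - a) * K x) := by
    refine Integrable.mono' ((hFint.norm).const_mul B) hmeas ?_
    filter_upwards with x
    rw [norm_mul]
    calc ‖F (x - a)‖ * ‖K x‖ ≤ ‖F (x - a)‖ * B :=
          mul_le_mul_of_nonneg_left (hKbd x) (norm_nonneg _)
      _ = B * ‖F (x - a)‖ := mul_comm _ _
  -- pointwise bound
  set M : ℝ := B * D / (c * (1 + ‖a‖)) ^ n with hMdef
  have hM0 : 0 ≤ M := by positivity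
  have hpt : ∀ x : EuclideanSpace ℝ (Fin (m + 1)),
      ‖F (x - a) * K x‖ ≤ M * ((1 + ‖x - a‖) ^ (m + 2 : ℕ))⁻¹ := by
    intro x
    by_cases hx : K x = 0
    · rw [hx, mul_zero, norm_zero]; positivity
    · have hxs : x ∈ Function.support K := hx
      have hg := hgeom x hxs
      have hpos : (0:ℝ) < 1 + ‖x - a‖ := lt_of_lt_of_le (by positivity) hg
      have hF : ‖F (x - a)‖ ≤ D / (1 + ‖x - a‖) ^ k := by
        rw [le_div_iff₀ (by positivity)]
        calc ‖F (x - a)‖ * (1 + ‖x - a‖) ^ k = (1 + ‖x - a‖) ^ k * ‖F (x - a)‖ := mul_comm _ _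
          _ ≤ D := hD (x - a)
      have hsplit : (1 + ‖x - a‖) ^ k = (1 + ‖x - a‖) ^ n * (1 + ‖x - a‖) ^ (m + 2 : ℕ) :=
        pow_add _ n (m + 2)
      have hpowsplit : (c * (1 + ‖a‖)) ^ n * (1 + ‖x - a‖) ^ (m + 2 : ℕ)
          ≤ (1 + ‖x - a‖) ^ k := by
        rw [hsplit]
        exact mul_le_mul_of_nonneg_right (pow_le_pow_left₀ (by positivity) hg n) (by positivity)
      have hcn : (c * (1 + ‖a‖)) ^ n ≠ 0 := by positivity
      have hXn : ((1 + ‖x - a‖) ^ (m + 2 : ℕ)) ≠ 0 := by positivity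
      calc ‖F (x - a) * K x‖ = ‖F (x - a)‖ * ‖K x‖ := norm_mul _ _
        _ ≤ (D / (1 + ‖x - a‖) ^ k) * B :=
            mul_le_mul hF (hKbd x) (norm_nonneg _) (by positivity)
        _ ≤ (D / ((c * (1 + ‖a‖)) ^ n * (1 + ‖x - a‖) ^ (m + 2 : ℕ))) * B := by
            gcongr
        _ = M * ((1 + ‖x - a‖) ^ (m + 2 : ℕ))⁻¹ := by
            rw [hMdef]; field_simp
  -- integrate
  have hintRHS : Integrable (fun x : EuclideanSpace ℝ (Fin (m + 1)) =>
      M * ((1 + ‖x - a‖) ^ (m + 2 : ℕ))⁻¹) :=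
    (hint.comp_sub_right a).const_mul M
  have hcn' : (c : ℝ) ^ n ≠ 0 := by positivity
  have han' : ((1 + ‖a‖) : ℝ) ^ n ≠ 0 := by positivity
  calc ‖∫ x, F (x - a) * K x‖ ≤ ∫ x, ‖F (x - a) * K x‖ := norm_integral_le_integral_norm _
    _ ≤ ∫ x, M * ((1 + ‖x - a‖) ^ (m + 2 : ℕ))⁻¹ :=
        integral_mono hprod.norm hintRHS hpt
    _ = M * I := by
        rw [integral_const_mul, hIdef,
          integral_sub_right_eq_self
            (fun x : EuclideanSpace ℝ (Fin (m + 1)) => ((1 + ‖x‖) ^ (m + 2 : ℕ))⁻¹) a]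
    _ = B * D * I / c ^ n / (1 + ‖a‖) ^ n := by
        rw [hMdef, mul_pow]; field_simp
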